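/- Let A be a type and R a commutative ring. Let ∂ be the unique R-derivation of MvPolynomial (A × ℕ) R with ∂(X(a, j)) = X(a, j+1), and let w : A × ℕ → ℤ be the weight function w(a, j) = j − 1. Define N(A) to be the set of polynomials that are weighted homogeneous of degree −1 with respect to w. Then N(A) is closed under the product P ▹ Q := P · ∂(Q) (i.e. if P and Q are weighted homogeneous of degree −1, so is P · ∂(Q)), and this product satisfies on N(A) both the left pre-Lie identity P ▹ (Q ▹ S) − (P ▹ Q) ▹ S = Q ▹ (P ▹ S) − (Q ▹ P) ▹ S and the right-NAP identity (P ▹ Q) ▹ S = (P ▹ S) ▹ Q; hence N(A) is a Novikov algebra. -/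

import Mathlib

open MvPolynomial

/-- The weight-(−1) homogeneous component `N(A)` of the polynomial algebra
`MvPolynomial (A × ℕ) R` (with weight `w (a, j) = j - 1`) is closed under the
product `P ▹ Q := P * ∂ Q`, where `∂ (X (a, j)) = X (a, j+1)`, and this product
satisfies the left pre-Lie identity and the right-NAP identity on `N(A)`; hence
`N(A)` is a Novikov algebra. -/
theorem freeNovikov_is_novikov {A : Type*} {R : Type*} [CommRing R]
    (D : Derivation R (MvPolynomial (A × ℕ) R) (MvPolynomial (A × ℕ) R))
    (hD : ∀ (a : A) (j : ℕ), D (X (a, j)) = X (a, j + 1))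
    (w : A × ℕ → ℤ) (hw : ∀ (a : A) (j : ℕ), w (a, j) = (j : ℤ) - 1) :
    (∀ P Q : MvPolynomial (A × ℕ) R,
      P.IsWeightedHomogeneous w (-1) → Q.IsWeightedHomogeneous w (-1) →
        (P * D Q).IsWeightedHomogeneous w (-1)) ∧
    (∀ P Q S : MvPolynomial (A × ℕ) R,
      P.IsWeightedHomogeneous w (-1) → Q.IsWeightedHomogeneous w (-1) →
      S.IsWeightedHomogeneous w (-1) →
        P * D (Q * D S) - (P * D Q) * D S = Q * D (P * D S) - (Q * D P) * D S) ∧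
    (∀ P Q S : MvPolynomial (A × ℕ) R,
      P.IsWeightedHomogeneous w (-1) → Q.IsWeightedHomogeneous w (-1) →
      S.IsWeightedHomogeneous w (-1) →
        (P * D Q) * D S = (P * D S) * D Q) := by
  -- homogeneity at a rewritten degree
  have hcongr : ∀ (p : MvPolynomial (A × ℕ) R) (d d' : ℤ),
      p.IsWeightedHomogeneous w d → d = d' → p.IsWeightedHomogeneous w d' := by
    rintro p d d' h rfl; exact h
  -- homogeneity is preserved by nsmul
  have hnsmul : ∀ (n : ℕ) (p : MvPolynomial (A × ℕ) R) (d : ℤ),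
      p.IsWeightedHomogeneous w d → (n • p).IsWeightedHomogeneous w d := by
    intro n p d h
    rw [← mem_weightedHomogeneousSubmodule R] at h ⊢
    exact nsmul_mem h n
  -- homogeneity is preserved by R-smul
  have hrsmul : ∀ (c : R) (p : MvPolynomial (A × ℕ) R) (d : ℤ),
      p.IsWeightedHomogeneous w d → (c • p).IsWeightedHomogeneous w d := by
    intro c p d h
    rw [← mem_weightedHomogeneousSubmodule R] at h ⊢
    exact Submodule.smul_mem _ c h
  -- powers of variables are homogeneous
  have hpow : ∀ (i : A × ℕ) (n : ℕ),
      ((X i : MvPolynomial (A × ℕ) R) ^ n).IsWeightedHomogeneous w ((n : ℤ) * w i) := by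
    intro i n
    induction n with
    | zero => simpa using isWeightedHomogeneous_one R w
    | succ n ih =>
        rw [pow_succ]
        exact hcongr _ _ _ (ih.mul (isWeightedHomogeneous_X R w i)) (by push_cast; ring)
  -- the monomial-product is homogeneous
  have hprodhom : ∀ f : (A × ℕ) →₀ ℕ,
      (f.prod fun i e => (X i : MvPolynomial (A × ℕ) R) ^ e).IsWeightedHomogeneous w
        (Finsupp.weight w f) := by
    intro f
    have := isWeightedHomogeneous_monomial (R := R) (w := w) f (1 : R) rfl
    rwa [monomial_eq, C_1, one_mul] at this
  -- D raises the weight of a variable by one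
  have hDX : ∀ i : A × ℕ,
      (D (X i : MvPolynomial (A × ℕ) R)).IsWeightedHomogeneous w (w i + 1) := by
    intro i
    rw [← Prod.mk.eta (p := i), hD]
    refine hcongr _ _ _ (isWeightedHomogeneous_X R w _) ?_
    rw [hw, hw]; push_cast; ring
  -- D of a power of a variable
  have hDpow : ∀ (i : A × ℕ) (n : ℕ), n ≠ 0 →
      (D ((X i : MvPolynomial (A × ℕ) R) ^ n)).IsWeightedHomogeneous w ((n : ℤ) * w i + 1) := by
    intro i n hn
    rw [Derivation.leibniz_pow, smul_eq_mul]
    refine hnsmul _ _ _ (hcongr _ _ _ ((hpow i (n - 1)).mul (hDX i)) ?_)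
    push_cast [Nat.cast_sub (Nat.one_le_iff_ne_zero.mpr hn)]
    ring
  -- D of a monomial-product is homogeneous of degree (weight + 1)
  have hprod : ∀ m : (A × ℕ) →₀ ℕ,
      (D (m.prod fun i e => (X i : MvPolynomial (A × ℕ) R) ^ e)).IsWeightedHomogeneous w
        (Finsupp.weight w m + 1) := by
    intro m
    induction m using Finsupp.induction with
    | zero => simpa using isWeightedHomogeneous_zero R w _
    | single_add i n f hif hn ih =>
        have hsingle : (Finsupp.single i n).prod (fun i e => (X i : MvPolynomial (A × ℕ) R) ^ e)
            = X i ^ n := Finsupp.prod_single_index (pow_zero _)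
        rw [Finsupp.prod_add_index' (fun _ => pow_zero _) (fun _ _ _ => pow_add _ _ _),
          hsingle, Derivation.leibniz, smul_eq_mul, smul_eq_mul]
        have hwm : Finsupp.weight w (Finsupp.single i n + f)
            = (n : ℤ) * w i + Finsupp.weight w f := by
          rw [map_add]
          congr 1
          simp [Finsupp.weight_apply, Finsupp.sum_single_index, nsmul_eq_mul]
        apply IsWeightedHomogeneous.add
        · exact hcongr _ _ _ ((hpow i n).mul ih) (by rw [hwm]; ring)
        · exact hcongr _ _ _ ((hprodhom f).mul (hDpow i n hn)) (by rw [hwm]; ring)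
  -- D raises the degree of any homogeneous polynomial by one
  have key : ∀ (Q : MvPolynomial (A × ℕ) R) (d : ℤ), Q.IsWeightedHomogeneous w d →
      (D Q).IsWeightedHomogeneous w (d + 1) := by
    intro Q d hQ
    rw [← support_sum_monomial_coeff Q, map_sum]
    refine IsWeightedHomogeneous.sum _ _ _ (fun m hm => ?_)
    have hwm : Finsupp.weight w m = d := hQ (mem_support_iff.mp hm)
    have : (monomial m (coeff m Q) : MvPolynomial (A × ℕ) R)
        = coeff m Q • m.prod fun i e => X i ^ e := by
      rw [monomial_eq, smul_eq_C_mul]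
    rw [this, D.map_smul]
    exact hrsmul _ _ _ (hcongr _ _ _ (hprod m) (by rw [hwm]))
  refine ⟨?_, ?_, ?_⟩
  · intro P Q hP hQ
    have h := hP.mul (key Q (-1) hQ)
    norm_num at h
    exact h
  · intro P Q S _ _ _
    rw [Derivation.leibniz D Q (D S), Derivation.leibniz D P (D S), smul_eq_mul, smul_eq_mul,
      smul_eq_mul, smul_eq_mul]
    ring
  · intro P Q S _ _ _
    ring
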